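/- Let s ∈ ℤ_{>0} and let (Pᵢ)_{i∈ℕ} be a sequence of subsets of ℝ^s with Pᵢ ⊆ P_{i+1} and Pᵢ ≠ P_{i+1} for every i (a strictly increasing sequence). Suppose the union ⋃_{i∈ℕ} Pᵢ is compact. Then there exist a point β ∈ ℝ^s and an index i₀ such that β ∈ Pᵢ for all i ≥ i₀ and β is an unstable point for the sequence (Pᵢ): for every open set U ⊆ ℝ^s containing β, the family { Pᵢ ∩ U : i ∈ ℕ } is an infinite set of subsets of ℝ^s. -/

import Mathlib

theorem exists_unstable_point (s : ℕ) (hs : 0 < s) (P : ℕ → Set (Fin s → ℝ))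
    (hmono : ∀ i, P i ⊆ P (i + 1)) (hne : ∀ i, P i ≠ P (i + 1))
    (hcomp : IsCompact (⋃ i, P i)) :
    ∃ β : Fin s → ℝ, ∃ i₀ : ℕ, (∀ i, i₀ ≤ i → β ∈ P i) ∧
      ∀ U : Set (Fin s → ℝ), IsOpen U → β ∈ U →
        { Q : Set (Fin s → ℝ) | ∃ i, Q = P i ∩ U }.Infinite := by
  have hPmono : Monotone P := monotone_nat_of_le_succ hmono
  -- pick witnesses of strict growth
  have hx : ∀ i, ∃ x, x ∈ P (i + 1) ∧ x ∉ P i := by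
    intro i
    by_contra h
    push_neg at h
    exact hne i (Set.Subset.antisymm (hmono i) fun x hx => (h x hx))
  choose x hx1 hx2 using hx
  have hxK : ∀ n, x n ∈ ⋃ i, P i := fun n => Set.mem_iUnion.2 ⟨n + 1, hx1 n⟩
  obtain ⟨β, hβK, φ, hφ, hlim⟩ := hcomp.tendsto_subseq hxK
  obtain ⟨i₀, hβ⟩ := Set.mem_iUnion.1 hβK
  refine ⟨β, i₀, fun i hi => hPmono hi hβ, ?_⟩
  intro U hU hβU
  intro hfin
  -- the monotone sequence i ↦ P i ∩ U has finite range, hence eventually constant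
  have hrange : {Q : Set (Fin s → ℝ) | ∃ i, Q = P i ∩ U}.Nonempty := ⟨P 0 ∩ U, 0, rfl⟩
  obtain ⟨Q, ⟨N, rfl⟩, hmax'⟩ := Set.Finite.exists_maximalFor id _ hfin hrange
  have hmax : ∀ a' ∈ {Q : Set (Fin s → ℝ) | ∃ i, Q = P i ∩ U}, P N ∩ U ⊆ a' → P N ∩ U = a' :=
    fun a' ha h => Set.Subset.antisymm h (hmax' ha h)
  have hconst : ∀ m, N ≤ m → P m ∩ U = P N ∩ U := by
    intro m hm
    exact (hmax (P m ∩ U) ⟨m, rfl⟩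
      (Set.inter_subset_inter_left U (hPmono hm))).symm
  -- infinitely many x (φ n) lie in U
  have hev : ∀ᶠ n in Filter.atTop, x (φ n) ∈ U :=
    hlim.eventually (hU.eventually_mem hβU)
  obtain ⟨n, hnN, hnU⟩ := (hev.and (Filter.eventually_atTop.2
    ⟨N, fun n hn => le_trans hn (hφ.le_apply)⟩)).exists
  -- contradiction: x (φ n) ∈ P (φ n + 1) ∩ U = P (φ n) ∩ U
  have h1 : x (φ n) ∈ P (φ n + 1) ∩ U := ⟨hx1 _, hnN⟩
  have h2 : P (φ n + 1) ∩ U = P (φ n) ∩ U := by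
    rw [hconst _ (le_trans hnU (Nat.le_succ _)), hconst _ hnU]
  rw [h2] at h1
  exact hx2 _ h1.1
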